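/- Let m be a finite nonempty type and A ∈ Matrix m m ℂ. Let ad_A denote the continuous ℂ-linear endomorphism of Matrix m m ℂ given by ad_A(C) = A·C − C·A. Then for every B ∈ Matrix m m ℂ, exp(A) · B · exp(−A) = (exp(ad_A))(B), where exp denotes the exponential in the Banach algebra of m×m complex matrices and in the Banach algebra of continuous linear endomorphisms of the matrix space, respectively. (This is the adjoint-action identity underlying the g-sim evolution rule: the finite adjoint action of a one-parameter gate is the exponential of its infinitesimal adjoint action.) -/

import Mathlib

open Matrix

attribute [local instance] Matrix.linftyOpSemiNormedRing Matrix.linftyOpNormedRing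
  Matrix.linftyOpNormedAlgebra

/-- The adjoint action `ad_A : C ↦ A·C − C·A` as a continuous ℂ-linear endomorphism of the
matrix space. -/
noncomputable def adMat {m : Type*} [Fintype m] [DecidableEq m] [Nonempty m]
    (A : Matrix m m ℂ) : Matrix m m ℂ →L[ℂ] Matrix m m ℂ :=
  ContinuousLinearMap.mul ℂ (Matrix m m ℂ) A -
    (ContinuousLinearMap.mul ℂ (Matrix m m ℂ)).flip A

/-- Left multiplication as a ring hom into continuous linear endomorphisms. -/
noncomputable def lmulHom {m : Type*} [Fintype m] [DecidableEq m] [Nonempty m] :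
    Matrix m m ℂ →+* (Matrix m m ℂ →L[ℂ] Matrix m m ℂ) where
  toFun A := ContinuousLinearMap.mul ℂ (Matrix m m ℂ) A
  map_one' := by ext C : 1; simp; rfl
  map_mul' A B := by ext C : 1; simp [mul_assoc]; rfl
  map_zero' := by ext C : 1; simp; rfl
  map_add' A B := by ext C : 1; simp [add_mul]; rfl

/-- Right multiplication as a ring hom from the opposite ring. -/
noncomputable def rmulHom {m : Type*} [Fintype m] [DecidableEq m] [Nonempty m] :
    (Matrix m m ℂ)ᵐᵒᵖ →+* (Matrix m m ℂ →L[ℂ] Matrix m m ℂ) where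
  toFun A := (ContinuousLinearMap.mul ℂ (Matrix m m ℂ)).flip A.unop
  map_one' := by ext C : 1; simp; rfl
  map_mul' A B := by ext C : 1; simp [mul_assoc]; exact (mul_assoc C _ _).symm
  map_zero' := by ext C : 1; simp; rfl
  map_add' A B := by ext C : 1; simp [mul_add]; rfl

/-- The adjoint-action identity underlying the g-sim evolution rule:
`exp(A) · B · exp(−A) = (exp(ad_A))(B)`; the finite adjoint action of a one-parameter gate is
the exponential of its infinitesimal adjoint action. Here `ad_A(C) = A·C − C·A`. -/
theorem exp_conj_eq_exp_adMat {m : Type*} [Fintype m] [DecidableEq m] [Nonempty m]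
    (A B : Matrix m m ℂ) :
    (∀ C : Matrix m m ℂ, adMat A C = A * C - C * A) ∧
    NormedSpace.exp A * B * NormedSpace.exp (-A) =
      (@NormedSpace.exp _ _ _
        (@NonUnitalSeminormedRing.toIsTopologicalRing _
          (@ContinuousLinearMap.toNormedRing ℂ (Matrix m m ℂ) _ _
            _).toNonUnitalNormedRing.toNonUnitalSeminormedRing) (adMat A)) B := by
  refine ⟨fun C => rfl, ?_⟩
  have hcont₁ : Continuous (lmulHom (m := m)) :=
    (ContinuousLinearMap.mul ℂ (Matrix m m ℂ)).continuous
  have hcont₂ : Continuous (rmulHom (m := m)) :=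
    ((ContinuousLinearMap.mul ℂ (Matrix m m ℂ)).flip.continuous).comp
      MulOpposite.continuous_unop
  have hAd : adMat A = lmulHom A + rmulHom (MulOpposite.op (-A)) := by
    ext C : 1
    simp [adMat, lmulHom, rmulHom, sub_eq_add_neg, mul_neg]
    rfl
  have hcomm : Commute (lmulHom (m := m) A) (rmulHom (MulOpposite.op (-A))) := by
    ext C : 1
    simp [lmulHom, rmulHom, mul_assoc]
    exact (mul_assoc _ _ _).symm
  rw [hAd]
  letI iR : NormedRing (Matrix m m ℂ →L[ℂ] Matrix m m ℂ) :=
    @ContinuousLinearMap.toNormedRing ℂ (Matrix m m ℂ) _ _ _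
  letI iA2 : NormedAlgebra ℂ (Matrix m m ℂ →L[ℂ] Matrix m m ℂ) :=
    @ContinuousLinearMap.toNormedAlgebra ℂ (Matrix m m ℂ) _ _ _
  letI iA : NormedAlgebra ℚ (Matrix m m ℂ →L[ℂ] Matrix m m ℂ) :=
    NormedAlgebra.restrictScalars ℚ ℂ _
  haveI : SequentialSpace (Matrix m m ℂ) := inferInstanceAs (SequentialSpace (m → m → ℂ))
  have hsplit := @NormedSpace.exp_add_of_commute (Matrix m m ℂ →L[ℂ] Matrix m m ℂ) _ _
    (by exact ContinuousLinearMap.instCompleteSpace) _ _ hcomm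
  have h1 := NormedSpace.map_exp (𝔸 := Matrix m m ℂ)
    (𝔹 := Matrix m m ℂ →L[ℂ] Matrix m m ℂ) (lmulHom (m := m)) hcont₁ A
  have h2 := NormedSpace.map_exp (𝔸 := (Matrix m m ℂ)ᵐᵒᵖ)
    (𝔹 := Matrix m m ℂ →L[ℂ] Matrix m m ℂ) (rmulHom (m := m)) hcont₂ (MulOpposite.op (-A))
  rw [NormedSpace.exp_op] at h2
  calc NormedSpace.exp A * B * NormedSpace.exp (-A)
      = (lmulHom (NormedSpace.exp A) *
          rmulHom (MulOpposite.op (NormedSpace.exp (-A)))) B := by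
        simp [lmulHom, rmulHom, mul_assoc]
        rfl
    _ = _ := by
        rw [← h1, ← h2] at hsplit
        exact congrArg (fun f : Matrix m m ℂ →L[ℂ] Matrix m m ℂ => f B) hsplit.symm
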